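/- Let {V_i}_{i=1}^m be an (m,l,d)-reconstruction system such that tr((V_i*V_i)^{1/2}) ≥ (d·l/m)^{1/2} for every 1 ≤ i ≤ m. Then (d/l)·I_l is submajorized by P_q(V); consequently, for every unitarily invariant norm ‖·‖ on M_l(ℂ) with gauge function ψ, d·η_ψ(l) ≤ ‖P_q(V)‖, and for every increasing convex f : ℝ_{≥0} → ℝ with f(0) = 0, l·f(d/l) ≤ tr(f(P_q(V))). -/

import Mathlib

open Matrix BigOperators
open scoped ComplexOrder

noncomputable section

variable {𝕜 : Type*} [RCLike 𝕜]

/-- Sum of the `k` largest entries of a vector `x : Fin n → ℝ`,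
as the supremum of the sums over subsets of cardinality `k`. -/
noncomputable def kMaxSum {n : ℕ} (x : Fin n → ℝ) (k : ℕ) : ℝ :=
  sSup ((fun t : Finset (Fin n) => ∑ i ∈ t, x i) '' {t : Finset (Fin n) | t.card = k})

/-- `x ≺_w y` : submajorization of real vectors. -/
def SubMajVec {n : ℕ} (x y : Fin n → ℝ) : Prop :=
  ∀ k : ℕ, k ≤ n → kMaxSum x k ≤ kMaxSum y k

/-- `A ≺_w B` : submajorization of self-adjoint matrices (via eigenvalues). -/
def SubMajMat {n : ℕ} (A B : Matrix (Fin n) (Fin n) 𝕜) : Prop :=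
  ∃ (hA : A.IsHermitian) (hB : B.IsHermitian), SubMajVec hA.eigenvalues hB.eigenvalues

/-- `A ≺ B` : majorization of self-adjoint matrices. -/
def MajMat {n : ℕ} (A B : Matrix (Fin n) (Fin n) 𝕜) : Prop :=
  SubMajMat A B ∧ A.trace = B.trace

/-- The q-potential `P_q(V) = Σ_{i,j} |V_i V_j*|²` of a reconstruction system. -/
noncomputable def qPotential {m l d : ℕ} (V : Fin m → Matrix (Fin l) (Fin d) 𝕜) :
    Matrix (Fin l) (Fin l) 𝕜 :=
  ∑ i, ∑ j, (V i * (V j)ᴴ)ᴴ * (V i * (V j)ᴴ)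

/-- `tr |A|² = tr(AᴴA)`, as a real number. -/
noncomputable def traceAbsSq {a b : ℕ} (A : Matrix (Fin a) (Fin b) 𝕜) : ℝ :=
  RCLike.re (Aᴴ * A).trace

/-- `tr |A| = tr((AᴴA)^{1/2})`, the sum of the singular values of `A`. -/
noncomputable def traceAbs {a b : ℕ} (A : Matrix (Fin a) (Fin b) 𝕜) : ℝ :=
  ∑ j, Real.sqrt ((Matrix.posSemidef_conjTranspose_mul_self A).1.eigenvalues j)

/-- A unitarily invariant norm on `M_n(𝕜)`. -/
structure UINorm (n : ℕ) (𝕜 : Type*) [RCLike 𝕜] where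
  N : Matrix (Fin n) (Fin n) 𝕜 → ℝ
  nonneg : ∀ A, 0 ≤ N A
  eq_zero : ∀ A, N A = 0 → A = 0
  triangle : ∀ A B, N (A + B) ≤ N A + N B
  smul_eq : ∀ (c : 𝕜) (A), N (c • A) = ‖c‖ * N A
  invariant : ∀ (A : Matrix (Fin n) (Fin n) 𝕜) (U W : Matrix.unitaryGroup (Fin n) 𝕜),
    N ((U : Matrix (Fin n) (Fin n) 𝕜) * A * (W : Matrix (Fin n) (Fin n) 𝕜)) = N A

/-- `X ⊕ 0_t` : padding a square matrix with `t` zero rows and columns. -/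
noncomputable def padMat {r : ℕ} (t : ℕ) (X : Matrix (Fin r) (Fin r) 𝕜) :
    Matrix (Fin (r + t)) (Fin (r + t)) 𝕜 :=
  Matrix.reindex finSumFinEquiv finSumFinEquiv (Matrix.fromBlocks X 0 0 0)

/-- A compatible unitarily invariant norm: a family of unitarily invariant norms,
one in each dimension, unchanged by adjoining zero rows and columns. -/
structure CUIN (𝕜 : Type*) [RCLike 𝕜] where
  N : ∀ n : ℕ, Matrix (Fin n) (Fin n) 𝕜 → ℝ
  nonneg : ∀ n A, 0 ≤ N n A
  eq_zero : ∀ n A, N n A = 0 → A = 0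
  triangle : ∀ n A B, N n (A + B) ≤ N n A + N n B
  smul_eq : ∀ n (c : 𝕜) (A), N n (c • A) = ‖c‖ * N n A
  invariant : ∀ n (A : Matrix (Fin n) (Fin n) 𝕜) (U W : Matrix.unitaryGroup (Fin n) 𝕜),
    N n ((U : Matrix (Fin n) (Fin n) 𝕜) * A * (W : Matrix (Fin n) (Fin n) 𝕜)) = N n A
  compatible : ∀ (r t : ℕ) (X : Matrix (Fin r) (Fin r) 𝕜), N (r + t) (padMat t X) = N r X

namespace CUIN

/-- The associated symmetric gauge function, evaluated on a real vector:
`ψ(x) = ‖diag(x)‖`. -/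
noncomputable def psi (Φ : CUIN 𝕜) {n : ℕ} (x : Fin n → ℝ) : ℝ :=
  Φ.N n (Matrix.diagonal fun i => (x i : 𝕜))

/-- `η_ψ(l) = ψ(e_l)/l = ‖I_l‖/l`. -/
noncomputable def eta (Φ : CUIN 𝕜) (l : ℕ) : ℝ := Φ.N l 1 / l

/-- A compatible u.i.n. is strict if `‖A‖ = tr(A)·η_ψ(l)` for positive semidefinite `A`
forces `A = (tr A / l)·I`. -/
def Strict (Φ : CUIN 𝕜) : Prop :=
  ∀ (l : ℕ) (A : Matrix (Fin l) (Fin l) 𝕜), A.PosSemidef →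
    Φ.N l A = RCLike.re A.trace * Φ.eta l → A = (A.trace / (l : 𝕜)) • 1

/-- A 2-strongly strict compatible u.i.n.: strict, and on `M_2` any two self-adjoint
matrices `A ≺ B` with equal norms are unitarily equivalent. -/
def TwoStronglyStrict (Φ : CUIN 𝕜) : Prop :=
  Φ.Strict ∧ ∀ A B : Matrix (Fin 2) (Fin 2) 𝕜, A.IsHermitian → B.IsHermitian →
    MajMat A B → Φ.N 2 A = Φ.N 2 B →
    ∃ U ∈ Matrix.unitaryGroup (Fin 2) 𝕜, A = star U * B * U

end CUIN

/-- Worst-case reconstruction error for `p` lost packets: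
`e_p^ψ(V) = max_{|K| = p} ‖V*V − V*E_K V‖ = max_{|K| = p} ‖Σ_{i ∈ K} Vᵢ*Vᵢ‖`. -/
noncomputable def errP {m l d : ℕ} (Φ : CUIN 𝕜) (p : ℕ)
    (V : Fin m → Matrix (Fin l) (Fin d) 𝕜) : ℝ :=
  sSup {r : ℝ | ∃ K : Finset (Fin m), K.card = p ∧ r = Φ.N d (∑ i ∈ K, (V i)ᴴ * V i)}

/-- The constant `c_{m,l,d} = √( (d/((m−1)·m·l))·(1 − d/(ml)) )`. -/
noncomputable def cmld (m l d : ℕ) : ℝ :=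
  Real.sqrt ((d : ℝ) / (((m : ℝ) - 1) * m * l) * (1 - (d : ℝ) / ((m : ℝ) * l)))

/-- A uniformly weighted projective rank-`l` `(m,l,d)`-protocol:
`Σᵢ Vᵢ*Vᵢ = I_d` and `VᵢVᵢ* = (d/(ml))·I_l` for every `i`. -/
def IsUWP {m l d : ℕ} (V : Fin m → Matrix (Fin l) (Fin d) 𝕜) : Prop :=
  (∑ i, (V i)ᴴ * V i = 1) ∧ ∀ i, V i * (V i)ᴴ = ((d : 𝕜) / ((m : 𝕜) * (l : 𝕜))) • 1

/-- A uniformly weighted projective rank-`l` `(m,l,d)`-protocol, stated via projections: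
`Σᵢ Vᵢ*Vᵢ = I_d` and `Vᵢ*Vᵢ = (d/(ml))·Pᵢ` with `Pᵢ` rank-`l` orthogonal projections. -/
def IsUWPProj {m l d : ℕ} (V : Fin m → Matrix (Fin l) (Fin d) 𝕜) : Prop :=
  (∑ i, (V i)ᴴ * V i = 1) ∧ ∀ i, ∃ P : Matrix (Fin d) (Fin d) 𝕜,
    Pᴴ = P ∧ P * P = P ∧ P.rank = l ∧ (V i)ᴴ * V i = ((d : 𝕜) / ((m : 𝕜) * (l : 𝕜))) • P

/-- Padding a vector with zeros to length `d`. -/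
def padVec {l : ℕ} (d : ℕ) (x : Fin l → ℝ) : Fin d → ℝ :=
  fun j => if h : (j : ℕ) < l then x ⟨j, h⟩ else 0

end


section AuxProofs

open Matrix BigOperators
open scoped ComplexOrder

private lemma kMaxSum_const {n k : ℕ} (hk : k ≤ n) (c : ℝ) :
    kMaxSum (fun _ : Fin n => c) k = k * c := by
  have : ((fun t : Finset (Fin n) => ∑ _i ∈ t, c) '' {t : Finset (Fin n) | t.card = k})
      = {(k : ℝ) * c} := by
    apply Set.eq_singleton_iff_nonempty_unique_mem.2
    constructor
    · obtain ⟨t, _, ht⟩ := Finset.exists_subset_card_eq (s := (Finset.univ : Finset (Fin n)))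
        (by simpa using hk)
      exact ⟨_, ⟨t, ht, rfl⟩⟩
    · rintro r ⟨t, ht, rfl⟩
      simp only [Set.mem_setOf_eq] at ht
      simp [Finset.sum_const, ht]
  rw [kMaxSum, this, csSup_singleton]

private lemma le_kMaxSum {n k : ℕ} (x : Fin n → ℝ) (t : Finset (Fin n)) (ht : t.card = k) :
    ∑ i ∈ t, x i ≤ kMaxSum x k := by
  apply le_csSup
  · exact ((Set.toFinite _).image _).bddAbove
  · exact ⟨t, ht, rfl⟩

private lemma exists_good_subset {n : ℕ} (x : Fin n → ℝ) :
    ∀ k : ℕ, k ≤ n → ∃ t : Finset (Fin n), t.card = k ∧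
      (k : ℝ) * ∑ i, x i ≤ (n : ℝ) * ∑ i ∈ t, x i := by
  intro k
  induction k with
  | zero => intro _; exact ⟨∅, by simp⟩
  | succ k ih =>
    intro hk1
    obtain ⟨t, htc, hts⟩ := ih (Nat.le_of_succ_le hk1)
    have hcompl : (tᶜ : Finset (Fin n)).Nonempty := by
      rw [← Finset.card_pos, Finset.card_compl, htc, Fintype.card_fin]
      omega
    obtain ⟨j, hj, hjmax⟩ := Finset.exists_max_image tᶜ x hcompl
    have hjt : j ∉ t := by simpa using hj
    refine ⟨insert j t, by rw [Finset.card_insert_of_notMem hjt, htc], ?_⟩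
    rw [Finset.sum_insert hjt]
    have hsplit : ∑ i ∈ tᶜ, x i + ∑ i ∈ t, x i = ∑ i, x i := by
      rw [Finset.sum_compl_add_sum]
    have hbound : ∑ i ∈ tᶜ, x i ≤ ((n : ℝ) - k) * x j := by
      have := Finset.sum_le_card_nsmul tᶜ x (x j) (fun i hi => hjmax i hi)
      rw [Finset.card_compl, htc, Fintype.card_fin] at this
      have hc : ((n - k : ℕ) : ℝ) = (n : ℝ) - k := by
        have : k ≤ n := Nat.le_of_succ_le hk1
        push_cast [this]; ring
      calc ∑ i ∈ tᶜ, x i ≤ (n - k) • x j := this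
        _ = ((n - k : ℕ) : ℝ) * x j := by rw [nsmul_eq_mul]
        _ = ((n : ℝ) - k) * x j := by rw [hc]
    have hnk : (1 : ℝ) ≤ (n : ℝ) - k := by
      have : ((k : ℝ) + 1) ≤ n := by exact_mod_cast hk1
      linarith
    push_cast
    nlinarith [hts, hbound, hsplit, hnk]

private lemma star_unitary_mul_cancel {n : ℕ} (U : Matrix.unitaryGroup (Fin n) ℂ)
    (X : Matrix (Fin n) (Fin n) ℂ) :
    (star (U : Matrix (Fin n) (Fin n) ℂ)) * ((U : Matrix (Fin n) (Fin n) ℂ) * X) = X := by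
  rw [← mul_assoc, Matrix.UnitaryGroup.star_mul_self, one_mul]

private lemma trace_conj_unitary {n : ℕ} (U : Matrix.unitaryGroup (Fin n) ℂ)
    (X : Matrix (Fin n) (Fin n) ℂ) :
    ((U : Matrix (Fin n) (Fin n) ℂ) * X * (star (U : Matrix (Fin n) (Fin n) ℂ))).trace
      = X.trace := by
  rw [Matrix.trace_mul_cycle, Matrix.UnitaryGroup.star_mul_self, one_mul]

private lemma herm_trace {n : ℕ} {B : Matrix (Fin n) (Fin n) ℂ} (hB : B.IsHermitian) :
    B.trace = ∑ i, (hB.eigenvalues i : ℂ) := by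
  conv_lhs => rw [hB.spectral_theorem, Unitary.conjStarAlgAut_apply]
  rw [trace_conj_unitary, Matrix.trace_diagonal]
  rfl

private lemma herm_trace_sq {n : ℕ} {B : Matrix (Fin n) (Fin n) ℂ} (hB : B.IsHermitian) :
    (B * B).trace = ∑ i, ((hB.eigenvalues i : ℂ)) ^ 2 := by
  have h : B * B = (hB.eigenvectorUnitary : Matrix (Fin n) (Fin n) ℂ)
      * (Matrix.diagonal (RCLike.ofReal ∘ hB.eigenvalues)
          * Matrix.diagonal (RCLike.ofReal ∘ hB.eigenvalues))
      * (star (hB.eigenvectorUnitary : Matrix (Fin n) (Fin n) ℂ)) := by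
    conv_lhs => rw [hB.spectral_theorem, Unitary.conjStarAlgAut_apply]
    simp only [mul_assoc]
    rw [star_unitary_mul_cancel]
  rw [h, trace_conj_unitary, Matrix.diagonal_mul_diagonal, Matrix.trace_diagonal]
  simp [sq]

private lemma mulVec_sum' {n p : ℕ} {ι : Type*} (s : Finset ι) (A : ι → Matrix (Fin n) (Fin p) ℂ)
    (x : Fin p → ℂ) : (∑ i ∈ s, A i) *ᵥ x = ∑ i ∈ s, A i *ᵥ x := by
  induction s using Finset.cons_induction with
  | empty => simp [Matrix.zero_mulVec]
  | cons a s ha ih => simp [Finset.sum_cons, Matrix.add_mulVec, ih]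

private lemma dotProduct_sum' {p : ℕ} {ι : Type*} (s : Finset ι) (y : Fin p → ℂ)
    (v : ι → Fin p → ℂ) : y ⬝ᵥ (∑ i ∈ s, v i) = ∑ i ∈ s, y ⬝ᵥ v i := by
  induction s using Finset.cons_induction with
  | empty => simp
  | cons a s ha ih => simp [Finset.sum_cons, dotProduct_add, ih]

private lemma qPotential_posSemidef {m l d : ℕ} (V : Fin m → Matrix (Fin l) (Fin d) ℂ) :
    (qPotential V).PosSemidef := by
  refine Matrix.PosSemidef.of_dotProduct_mulVec_nonneg ?_ ?_
  · unfold qPotential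
    simp only [Matrix.IsHermitian, Matrix.conjTranspose_sum, Matrix.conjTranspose_mul,
      Matrix.conjTranspose_conjTranspose]
  · intro x
    unfold qPotential
    rw [mulVec_sum']
    rw [dotProduct_sum']
    simp only [mulVec_sum', dotProduct_sum']
    apply Finset.sum_nonneg
    intro i _
    apply Finset.sum_nonneg
    intro j _
    exact (Matrix.posSemidef_conjTranspose_mul_self (V i * (V j)ᴴ)).dotProduct_mulVec_nonneg x

private lemma trace_qPotential {m l d : ℕ} (V : Fin m → Matrix (Fin l) (Fin d) ℂ) :
    (qPotential V).trace = ((∑ i, (V i)ᴴ * V i) * (∑ i, (V i)ᴴ * V i)).trace := by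
  have key : ∀ (X Y : Matrix (Fin l) (Fin d) ℂ),
      ((X * Yᴴ)ᴴ * (X * Yᴴ)).trace = ((Xᴴ * X) * (Yᴴ * Y)).trace := by
    intro X Y
    rw [Matrix.conjTranspose_mul, Matrix.conjTranspose_conjTranspose]
    rw [show Y * Xᴴ * (X * Yᴴ) = Y * (Xᴴ * X * Yᴴ) by simp only [Matrix.mul_assoc]]
    rw [Matrix.trace_mul_comm]
    simp only [Matrix.mul_assoc]
  rw [qPotential, Matrix.trace_sum, Finset.sum_mul, Matrix.trace_sum]
  apply Finset.sum_congr rfl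
  intro i _
  rw [Matrix.trace_sum, Finset.mul_sum, Matrix.trace_sum]
  exact Finset.sum_congr rfl fun j _ => key (V i) (V j)

private lemma traceAbs_sq_le {a b : ℕ} (A : Matrix (Fin a) (Fin b) ℂ) :
    traceAbs A ^ 2 ≤ (a : ℝ) * RCLike.re (Aᴴ * A).trace := by
  classical
  set hP := Matrix.posSemidef_conjTranspose_mul_self A with hPdef
  set lam := hP.1.eigenvalues with hlam
  have hnn : ∀ j, 0 ≤ lam j := hP.eigenvalues_nonneg
  have htr : RCLike.re (Aᴴ * A).trace = ∑ j, lam j := by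
    rw [herm_trace hP.1]
    simp [map_sum]
    rfl
  set T := Finset.univ.filter (fun j => lam j ≠ 0) with hT
  have hcard : (T.card : ℝ) ≤ a := by
    have h1 : T.card = Fintype.card {j // lam j ≠ 0} := (Fintype.card_subtype _).symm
    have h2 : (Aᴴ * A).rank = Fintype.card {j // lam j ≠ 0} := hP.1.rank_eq_card_non_zero_eigs
    have h3 : (Aᴴ * A).rank = A.rank := Matrix.rank_conjTranspose_mul_self A
    have h4 : A.rank ≤ a := by
      have := Matrix.rank_le_card_height A
      simpa using this
    have : T.card ≤ a := by omega
    exact_mod_cast this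
  have hsum : traceAbs A = ∑ j ∈ T, Real.sqrt (lam j) := by
    rw [traceAbs]
    rw [← Finset.sum_subset (Finset.subset_univ T)]
    intro j _ hj
    have : lam j = 0 := by
      by_contra h
      exact hj (Finset.mem_filter.2 ⟨Finset.mem_univ j, h⟩)
    show Real.sqrt (lam j) = 0
    rw [this, Real.sqrt_zero]
  have cheb : (∑ j ∈ T, Real.sqrt (lam j)) ^ 2 ≤ T.card * ∑ j ∈ T, Real.sqrt (lam j) ^ 2 :=
    sq_sum_le_card_mul_sum_sq
  have hsq : ∑ j ∈ T, Real.sqrt (lam j) ^ 2 = ∑ j ∈ T, lam j := by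
    apply Finset.sum_congr rfl
    intro j _
    exact Real.sq_sqrt (hnn j)
  have hTle : ∑ j ∈ T, lam j ≤ ∑ j, lam j :=
    Finset.sum_le_sum_of_subset_of_nonneg (Finset.subset_univ T) fun j _ _ => hnn j
  have hlamnn : 0 ≤ ∑ j ∈ T, lam j := Finset.sum_nonneg fun j _ => hnn j
  calc traceAbs A ^ 2 = (∑ j ∈ T, Real.sqrt (lam j)) ^ 2 := by rw [hsum]
    _ ≤ T.card * ∑ j ∈ T, lam j := by rw [← hsq]; exact_mod_cast cheb
    _ ≤ (a : ℝ) * ∑ j, lam j := by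
        apply mul_le_mul hcard hTle hlamnn (Nat.cast_nonneg a)
    _ = (a : ℝ) * RCLike.re (Aᴴ * A).trace := by rw [htr]

private lemma trace_qPotential_ge {m l d : ℕ} (hl : 0 < l) (hd : 0 < d) (hm : 0 < m)
    (V : Fin m → Matrix (Fin l) (Fin d) ℂ)
    (htr : ∀ i, Real.sqrt ((d : ℝ) * l / m) ≤ traceAbs (V i)) :
    (d : ℝ) ≤ RCLike.re (qPotential V).trace := by
  have hdl : (0:ℝ) < l := by exact_mod_cast hl
  have hdd : (0:ℝ) < d := by exact_mod_cast hd
  have hdm : (0:ℝ) < m := by exact_mod_cast hm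
  have step1 : ∀ i, (d : ℝ) / m ≤ RCLike.re ((V i)ᴴ * V i).trace := by
    intro i
    have h0 : (0:ℝ) ≤ (d : ℝ) * l / m := by positivity
    have h1 : (d : ℝ) * l / m ≤ traceAbs (V i) ^ 2 := by
      have := htr i
      calc (d : ℝ) * l / m = Real.sqrt ((d : ℝ) * l / m) ^ 2 := (Real.sq_sqrt h0).symm
        _ ≤ traceAbs (V i) ^ 2 := by
            apply pow_le_pow_left₀ (Real.sqrt_nonneg _) this
    have h2 := traceAbs_sq_le (V i)
    have := h1.trans h2
    rw [div_le_iff₀ hdm] at *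
    nlinarith [this]
  set S := ∑ i, (V i)ᴴ * V i with hS
  have hSherm : S.IsHermitian := by
    show Sᴴ = S
    rw [hS, Matrix.conjTranspose_sum]
    exact Finset.sum_congr rfl fun i _ => (Matrix.posSemidef_conjTranspose_mul_self (V i)).1
  have step2 : (d : ℝ) ≤ RCLike.re S.trace := by
    rw [hS, Matrix.trace_sum, map_sum]
    calc (d : ℝ) = ∑ _i : Fin m, (d : ℝ) / m := by
          rw [Finset.sum_const, Finset.card_univ, Fintype.card_fin, nsmul_eq_mul]
          field_simp
      _ ≤ ∑ i, RCLike.re ((V i)ᴴ * V i).trace := Finset.sum_le_sum fun i _ => step1 i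
  set μ := hSherm.eigenvalues with hμ
  have hμsum : ∑ k, μ k = RCLike.re S.trace := by
    rw [herm_trace hSherm, map_sum]
    simp
    rfl
  have hμd : (d : ℝ) ≤ ∑ k, μ k := by rw [hμsum]; exact step2
  have step4 : RCLike.re (S * S).trace = ∑ k, μ k ^ 2 := by
    rw [herm_trace_sq hSherm, map_sum]
    apply Finset.sum_congr rfl
    intro k _
    show ((μ k : ℂ) ^ 2).re = μ k ^ 2
    rw [← Complex.ofReal_pow, Complex.ofReal_re]
  have cheb : (∑ k, μ k) ^ 2 ≤ (d : ℝ) * ∑ k, μ k ^ 2 := by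
    have := sq_sum_le_card_mul_sum_sq (s := (Finset.univ : Finset (Fin d))) (f := μ)
    simpa using this
  have hd2 : (d : ℝ) * d ≤ (∑ k, μ k) ^ 2 := by nlinarith [hμd, hdd]
  have final : (d : ℝ) ≤ ∑ k, μ k ^ 2 := by nlinarith [cheb, hd2, hdd]
  rw [trace_qPotential V, step4]
  exact final

private lemma eigenvalues_ofReal_smul_one {n : ℕ} (c : ℝ)
    (h : (((c : ℂ)) • (1 : Matrix (Fin n) (Fin n) ℂ)).IsHermitian) (i : Fin n) :
    h.eigenvalues i = c := by
  have hd := h.conjStarAlgAut_star_eigenvectorUnitary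
  rw [Unitary.conjStarAlgAut_star_apply, Matrix.mul_smul, Matrix.smul_mul, mul_one, Matrix.UnitaryGroup.star_mul_self] at hd
  have := congrFun (congrFun hd.symm i) i
  rw [Matrix.diagonal_apply_eq, Matrix.smul_apply, Matrix.one_apply_eq, smul_eq_mul, mul_one]
    at this
  simp only [Function.comp_apply] at this
  exact RCLike.ofReal_inj.mp this

private lemma eigenvalues_smul_one' {n : ℕ} (z : ℂ) (c : ℝ) (hz : z = (c : ℂ))
    (h : (z • (1 : Matrix (Fin n) (Fin n) ℂ)).IsHermitian) (i : Fin n) :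
    h.eigenvalues i = c := by
  subst hz
  exact eigenvalues_ofReal_smul_one c h i

private lemma equiv_toPEquiv_toMatrix' {n : ℕ} (σ : Equiv.Perm (Fin n)) (i j : Fin n) :
    (σ.toPEquiv.toMatrix : Matrix (Fin n) (Fin n) ℂ) i j = (1 : Matrix (Fin n) (Fin n) ℂ) (σ i) j := by
  rw [PEquiv.toMatrix_toPEquiv_apply, Matrix.one_apply, Pi.single_apply]
  simp only [eq_comm]

private lemma perm_matrix_star {n : ℕ} (σ : Equiv.Perm (Fin n)) :
    star (σ.toPEquiv.toMatrix : Matrix (Fin n) (Fin n) ℂ) = σ.symm.toPEquiv.toMatrix := by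
  ext i j
  rw [Matrix.star_apply, equiv_toPEquiv_toMatrix',
    equiv_toPEquiv_toMatrix', Matrix.one_apply, Matrix.one_apply]
  by_cases h : σ j = i
  · have h2 : σ.symm i = j := by rw [← h, Equiv.symm_apply_apply]
    simp [h, h2]
  · have h2 : ¬ σ.symm i = j := fun hc => h (by rw [← hc, Equiv.apply_symm_apply])
    simp [h, h2]

private lemma perm_matrix_mem {n : ℕ} (σ : Equiv.Perm (Fin n)) :
    (σ.toPEquiv.toMatrix : Matrix (Fin n) (Fin n) ℂ) ∈ Matrix.unitaryGroup (Fin n) ℂ := by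
  rw [Matrix.mem_unitaryGroup_iff']
  rw [perm_matrix_star, PEquiv.toMatrix_toPEquiv_mul]
  ext i j
  rw [Matrix.submatrix_apply, equiv_toPEquiv_toMatrix', id,
    Equiv.apply_symm_apply]

private lemma perm_conj_diagonal {n : ℕ} (σ : Equiv.Perm (Fin n)) (w : Fin n → ℂ) :
    (σ.toPEquiv.toMatrix : Matrix (Fin n) (Fin n) ℂ) * Matrix.diagonal w
      * star (σ.toPEquiv.toMatrix : Matrix (Fin n) (Fin n) ℂ)
      = Matrix.diagonal (w ∘ σ) := by
  rw [perm_matrix_star, PEquiv.toMatrix_toPEquiv_mul,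
    PEquiv.mul_toMatrix_toPEquiv]
  ext i j
  rw [Matrix.submatrix_apply, Matrix.submatrix_apply, Equiv.symm_symm]
  simp only [id]
  rcases eq_or_ne i j with h | h
  · subst h; simp [Matrix.diagonal_apply_eq]
  · rw [Matrix.diagonal_apply_ne w (fun hc => h (σ.injective hc)),
      Matrix.diagonal_apply_ne _ h]

private lemma UINorm_zero {n : ℕ} (Ψ : UINorm n ℂ) : Ψ.N 0 = 0 := by
  have := Ψ.smul_eq 0 0
  simpa using this

private lemma UINorm_sum_le {n : ℕ} (Ψ : UINorm n ℂ) {ι : Type*} (s : Finset ι)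
    (f : ι → Matrix (Fin n) (Fin n) ℂ) :
    Ψ.N (∑ i ∈ s, f i) ≤ ∑ i ∈ s, Ψ.N (f i) := by
  induction s using Finset.cons_induction with
  | empty => simp [UINorm_zero]
  | cons a s ha ih =>
    rw [Finset.sum_cons, Finset.sum_cons]
    exact (Ψ.triangle _ _).trans (by linarith)

end AuxProofs

theorem stmt4 (m l d : ℕ) (hl : 0 < l) (hld : l < d)
    (V : Fin m → Matrix (Fin l) (Fin d) ℂ)
    (hinv : IsUnit (∑ i, (V i)ᴴ * V i))
    (htr : ∀ i, Real.sqrt ((d : ℝ) * l / m) ≤ traceAbs (V i)) :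
    SubMajMat (((d : ℂ) / (l : ℂ)) • (1 : Matrix (Fin l) (Fin l) ℂ)) (qPotential V) ∧
    (∀ Ψ : UINorm l ℂ, (d : ℝ) * (Ψ.N 1 / l) ≤ Ψ.N (qPotential V)) ∧
    (∀ f : ℝ → ℝ, MonotoneOn f (Set.Ici 0) → ConvexOn ℝ (Set.Ici 0) f → f 0 = 0 →
      ∀ hP : (qPotential V).IsHermitian,
        (l : ℝ) * f ((d : ℝ) / l) ≤ ∑ i, f (hP.eigenvalues i)) := by
  classical
  have hd : 0 < d := hl.trans hld
  have hm : 0 < m := by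
    rcases Nat.eq_zero_or_pos m with h0 | h
    · exfalso
      haveI : Nonempty (Fin d) := ⟨⟨0, hd⟩⟩
      subst h0
      rw [show (∑ i : Fin 0, (V i)ᴴ * V i) = 0 from by simp] at hinv
      exact one_ne_zero ((isUnit_zero_iff.mp hinv).symm)
    · exact h
  have hPSD := qPotential_posSemidef V
  have hPH : (qPotential V).IsHermitian := hPSD.1
  have htrP : (d : ℝ) ≤ RCLike.re (qPotential V).trace := trace_qPotential_ge hl hd hm V htr
  have hl' : (0:ℝ) < l := Nat.cast_pos.mpr hl
  have hd' : (0:ℝ) < d := Nat.cast_pos.mpr hd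
  have hApos : ((d:ℂ)/(l:ℂ)) = (((d:ℝ)/(l:ℝ) : ℝ) : ℂ) := by push_cast; ring
  have hA : (((d:ℂ)/(l:ℂ)) • (1 : Matrix (Fin l) (Fin l) ℂ)).IsHermitian := by
    show _ᴴ = _
    rw [Matrix.conjTranspose_smul, Matrix.conjTranspose_one, hApos]
    rw [show star (((d:ℝ)/(l:ℝ) : ℝ) : ℂ) = (((d:ℝ)/(l:ℝ) : ℝ) : ℂ) from Complex.conj_ofReal _]
  have hsumP : ∑ i, hPH.eigenvalues i = RCLike.re (qPotential V).trace := by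
    rw [herm_trace hPH, map_sum]
    simp
  refine ⟨⟨hA, hPH, ?_⟩, ?_, ?_⟩
  · -- Part 1 : submajorization
    intro k hk
    rw [show hA.eigenvalues = fun _ : Fin l => (d:ℝ)/l from
      funext fun i => eigenvalues_smul_one' _ _ hApos hA i]
    rw [kMaxSum_const hk]
    obtain ⟨t, htc, hts⟩ := exists_good_subset hPH.eigenvalues k hk
    refine le_trans ?_ (le_kMaxSum hPH.eigenvalues t htc)
    have h2 : (k:ℝ) * d ≤ (k:ℝ) * ∑ i, hPH.eigenvalues i := by
      apply mul_le_mul_of_nonneg_left _ (Nat.cast_nonneg k)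
      rw [hsumP]; exact htrP
    have h1 : (k:ℝ) * d ≤ (l:ℝ) * ∑ i ∈ t, hPH.eigenvalues i := h2.trans hts
    rw [show (k:ℝ) * ((d:ℝ)/l) = ((k:ℝ) * d)/l from by ring, div_le_iff₀ hl']
    linarith [h1]
  · -- Part 2 : unitarily invariant norms
    intro Ψ
    haveI : NeZero l := ⟨hl.ne'⟩
    have hNPD : Ψ.N (qPotential V) =
        Ψ.N (Matrix.diagonal (RCLike.ofReal ∘ hPH.eigenvalues)) := by
      conv_lhs => rw [hPH.spectral_theorem]
      have := Ψ.invariant (Matrix.diagonal (RCLike.ofReal ∘ hPH.eigenvalues))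
        hPH.eigenvectorUnitary (star hPH.eigenvectorUnitary)
      rw [Unitary.coe_star] at this
      exact this
    have hperm : ∀ σ : Equiv.Perm (Fin l),
        Ψ.N (Matrix.diagonal ((RCLike.ofReal ∘ hPH.eigenvalues) ∘ σ)) =
        Ψ.N (Matrix.diagonal (RCLike.ofReal ∘ hPH.eigenvalues)) := by
      intro σ
      have hmem := perm_matrix_mem (n := l) σ
      have := Ψ.invariant (Matrix.diagonal (RCLike.ofReal ∘ hPH.eigenvalues))
        ⟨_, hmem⟩ (star ⟨_, hmem⟩)
      rw [Unitary.coe_star] at this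
      rw [← this]
      congr 1
      exact (perm_conj_diagonal σ _).symm
    have hsumdiag : ∑ s : Fin l,
        Matrix.diagonal ((RCLike.ofReal ∘ hPH.eigenvalues) ∘ (Equiv.addLeft s))
        = (((∑ i, hPH.eigenvalues i : ℝ)) : ℂ) • (1 : Matrix (Fin l) (Fin l) ℂ) := by
      ext i j
      rcases eq_or_ne i j with h | h
      · subst h
        rw [Matrix.sum_apply]
        simp only [Matrix.diagonal_apply_eq, Function.comp_apply, Equiv.coe_addLeft,
          Matrix.smul_apply, Matrix.one_apply_eq, smul_eq_mul, mul_one]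
        rw [show ((∑ i : Fin l, hPH.eigenvalues i : ℝ) : ℂ)
            = ∑ s : Fin l, ((hPH.eigenvalues s : ℝ) : ℂ) from by rw [Complex.ofReal_sum]]
        exact Fintype.sum_equiv (Equiv.addRight i) _ _ (fun s => rfl)
      · rw [Matrix.sum_apply]
        rw [Finset.sum_eq_zero, Matrix.smul_apply, Matrix.one_apply_ne h, smul_zero]
        intro s _
        exact Matrix.diagonal_apply_ne _ h
    have htri := UINorm_sum_le Ψ Finset.univ
      (fun s : Fin l => Matrix.diagonal ((RCLike.ofReal ∘ hPH.eigenvalues) ∘ (Equiv.addLeft s)))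
    rw [hsumdiag] at htri
    have heq : ∀ s : Fin l,
        Ψ.N (Matrix.diagonal ((RCLike.ofReal ∘ hPH.eigenvalues) ∘ (Equiv.addLeft s)))
        = Ψ.N (Matrix.diagonal (RCLike.ofReal ∘ hPH.eigenvalues)) :=
      fun s => hperm (Equiv.addLeft s)
    rw [Finset.sum_congr rfl (fun s _ => heq s), Finset.sum_const, Finset.card_univ,
      Fintype.card_fin, nsmul_eq_mul] at htri
    have hcnn : (0:ℝ) ≤ ∑ i, hPH.eigenvalues i := by
      rw [hsumP]; linarith
    have hsm : Ψ.N ((((∑ i, hPH.eigenvalues i : ℝ)) : ℂ) • (1 : Matrix (Fin l) (Fin l) ℂ))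
        = (∑ i, hPH.eigenvalues i) * Ψ.N 1 := by
      rw [Ψ.smul_eq, Complex.norm_real, Real.norm_eq_abs, abs_of_nonneg hcnn]
    rw [hsm] at htri
    have hdle : (d:ℝ) * Ψ.N 1 ≤ (∑ i, hPH.eigenvalues i) * Ψ.N 1 := by
      apply mul_le_mul_of_nonneg_right _ (Ψ.nonneg 1)
      rw [hsumP]; exact htrP
    rw [show (d:ℝ) * (Ψ.N 1 / l) = ((d:ℝ) * Ψ.N 1)/l from by ring, div_le_iff₀ hl']
    calc (d:ℝ) * Ψ.N 1 ≤ (∑ i, hPH.eigenvalues i) * Ψ.N 1 := hdle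
      _ ≤ (l:ℝ) * Ψ.N (Matrix.diagonal (RCLike.ofReal ∘ hPH.eigenvalues)) := htri
      _ = Ψ.N (qPotential V) * l := by rw [← hNPD]; ring
  · -- Part 3 : trace inequality
    intro f hmono hconv hf0 hP
    have hnn : ∀ i, 0 ≤ hP.eigenvalues i := fun i => hPSD.eigenvalues_nonneg i
    have hsum : (d:ℝ) ≤ ∑ i, hP.eigenvalues i := by
      have h5 : ∑ i, hP.eigenvalues i = RCLike.re (qPotential V).trace := by
        rw [herm_trace hP, map_sum]
        simp
      rw [h5]; exact htrP
    have jensen : f (∑ i, (1/(l:ℝ)) • hP.eigenvalues i)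
        ≤ ∑ i, (1/(l:ℝ)) • f (hP.eigenvalues i) := by
      apply hconv.map_sum_le (fun i _ => by positivity) ?_ (fun i _ => hnn i)
      rw [Finset.sum_const, Finset.card_univ, Fintype.card_fin, nsmul_eq_mul]
      field_simp
    simp only [smul_eq_mul] at jensen
    have hmean : ∑ i, (1/(l:ℝ)) * hP.eigenvalues i = (∑ i, hP.eigenvalues i)/l := by
      rw [← Finset.mul_sum]; ring
    have hmem1 : (d:ℝ)/l ∈ Set.Ici (0:ℝ) := by
      simp only [Set.mem_Ici]; positivity
    have hmem2 : (∑ i, hP.eigenvalues i)/l ∈ Set.Ici (0:ℝ) := by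
      simp only [Set.mem_Ici]
      apply div_nonneg (Finset.sum_nonneg fun i _ => hnn i) hl'.le
    have h2 : f ((d:ℝ)/l) ≤ f ((∑ i, hP.eigenvalues i)/l) := by
      apply hmono hmem1 hmem2
      exact (div_le_div_iff_of_pos_right hl').mpr hsum
    have h3 : f ((∑ i, hP.eigenvalues i)/l) ≤ (1/(l:ℝ)) * ∑ i, f (hP.eigenvalues i) := by
      rw [← hmean] at *
      calc f (∑ i, (1/(l:ℝ)) * hP.eigenvalues i) ≤ ∑ i, (1/(l:ℝ)) * f (hP.eigenvalues i) :=
            jensen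
        _ = (1/(l:ℝ)) * ∑ i, f (hP.eigenvalues i) := by rw [Finset.mul_sum]
    have h4 : f ((d:ℝ)/l) ≤ (1/(l:ℝ)) * ∑ i, f (hP.eigenvalues i) := h2.trans h3
    calc (l:ℝ) * f ((d:ℝ)/l) ≤ (l:ℝ) * ((1/(l:ℝ)) * ∑ i, f (hP.eigenvalues i)) :=
          mul_le_mul_of_nonneg_left h4 hl'.le
      _ = ∑ i, f (hP.eigenvalues i) := by field_simp
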